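/- arXiv:1008.1976 — 4 statements merged into one kernel-verified Lean document; each statement's English description precedes it below -/
import Mathlib

section
/- Let M and M' be two 𝒮-towers and let g_0 : N_0 → N'_0 be a morphism. Suppose (h_i : M_i → M'_i)_{i≥0} and (g_i : N_i → N'_i)_{i≥1} are morphisms such that for all i ≥ 0 the squares h_i ∘ f_{i+1} = f'_{i+1} ∘ h_{i+1}, g_i ∘ ε_i = ε'_i ∘ h_i, and the squares with the connecting morphisms N_i → M_{i+1}[1] commute. Then the morphisms g_i for i ≥ 1 are uniquely determined by g_0: if (h'_i, g'_i) is another such family with the same g_0, then g'_i = g_i for all i ≥ 1. -/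
open CategoryTheory CategoryTheory.Limits CategoryTheory.Pretriangulated

universe v u

section TowerDefs

variable (C : Type u) [Category.{v} C] [HasZeroObject C] [HasShift C ℤ] [Preadditive C]
  [∀ n : ℤ, (shiftFunctor C n).Additive] [Pretriangulated C]

/-- Objects isomorphic to finite direct sums of objects of `S` (direct sums encoded by
binary biproduct data). -/
inductive MemAddS (S : Set C) : C → Prop
  | of {X Y : C} (hX : X ∈ S) (e : Y ≅ X) : MemAddS S Y
  | zero {X : C} (hX : IsZero X) : MemAddS S X
  | sum {X Y Z : C} (i₁ : X ⟶ Z) (i₂ : Y ⟶ Z) (p₁ : Z ⟶ X) (p₂ : Z ⟶ Y)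
      (h₁ : i₁ ≫ p₁ = 𝟙 X) (h₂ : i₂ ≫ p₂ = 𝟙 Y) (h₁₂ : i₁ ≫ p₂ = 0) (h₂₁ : i₂ ≫ p₁ = 0)
      (hid : p₁ ≫ i₁ + p₂ ≫ i₂ = 𝟙 Z)
      (hX : MemAddS S X) (hY : MemAddS S Y) : MemAddS S Z

/-- An `𝒮`-tower: a diagram `⋯ → M_2 → M_1 → M_0 → N_0` as in §3.1 of the paper, with
`M_i = 0` for `i ≫ 0`, where `N i` is the cone of `f i : M (i+1) ⟶ M i` (so `N 0` is the
third vertex of a distinguished triangle on `f 0`, and `ε i : M i ⟶ N i` is the canonical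
map), each `N i` lies in `add 𝒮`, the map `Hom(N 0, X) → Hom(M 0, X)` is surjective for
`X ∈ 𝒮`, and `Hom(N i, X) → Hom(M i, X)` is bijective for `X ∈ 𝒮` and `i ≥ 1`. -/
structure STower (S : Set C) where
  M : ℕ → C
  f : ∀ i, M (i + 1) ⟶ M i
  N : ℕ → C
  ε : ∀ i, M i ⟶ N i
  δ : ∀ i, N i ⟶ (M (i + 1))⟦(1 : ℤ)⟧
  bound : ∃ r, ∀ i, r ≤ i → IsZero (M i)
  tri : ∀ i, Triangle.mk (f i) (ε i) (δ i) ∈ distTriang C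
  mem_addS : ∀ i, MemAddS C S (N i)
  surj : ∀ X ∈ S, Function.Surjective fun g : N 0 ⟶ X => ε 0 ≫ g
  bij : ∀ i, 1 ≤ i → ∀ X ∈ S, Function.Bijective fun g : N i ⟶ X => ε i ≫ g

end TowerDefs

section AuxLemmas

variable {C : Type u} [Category.{v} C] [HasZeroObject C] [HasShift C ℤ] [Preadditive C]
  [∀ n : ℤ, (shiftFunctor C n).Additive] [Pretriangulated C] {S : Set C}

/-- Surjectivity of `ε ≫ -` extends from `S` to `add S`. -/
lemma MemAddS.factor {M A : C} (ε : M ⟶ A)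
    (hs : ∀ X ∈ S, Function.Surjective fun g : A ⟶ X => ε ≫ g)
    {X : C} (hX : MemAddS C S X) (φ : M ⟶ X) : ∃ g : A ⟶ X, φ = ε ≫ g := by
  induction hX with
  | @of X Y hX e =>
    obtain ⟨g, hg⟩ := hs _ hX (φ ≫ e.hom)
    refine ⟨g ≫ e.inv, ?_⟩
    have : ε ≫ g = φ ≫ e.hom := hg
    rw [← Category.assoc, this, Category.assoc, e.hom_inv_id, Category.comp_id]
  | zero hX => exact ⟨0, by rw [Limits.comp_zero, hX.eq_of_tgt φ 0]⟩
  | sum i₁ i₂ p₁ p₂ h₁ h₂ h₁₂ h₂₁ hid hX hY ihX ihY =>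
    obtain ⟨u, hu⟩ := ihX (φ ≫ p₁)
    obtain ⟨v, hv⟩ := ihY (φ ≫ p₂)
    refine ⟨u ≫ i₁ + v ≫ i₂, ?_⟩
    calc φ = φ ≫ (p₁ ≫ i₁ + p₂ ≫ i₂) := by rw [hid, Category.comp_id]
    _ = (φ ≫ p₁) ≫ i₁ + (φ ≫ p₂) ≫ i₂ := by
        rw [Preadditive.comp_add, Category.assoc, Category.assoc]
    _ = ε ≫ (u ≫ i₁ + v ≫ i₂) := by
        rw [hu, hv, Preadditive.comp_add, Category.assoc, Category.assoc]

/-- Injectivity of `ε ≫ -` extends from `S` to `add S`. -/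
lemma MemAddS.cancel {M A : C} (ε : M ⟶ A)
    (hi : ∀ X ∈ S, Function.Injective fun g : A ⟶ X => ε ≫ g)
    {X : C} (hX : MemAddS C S X) (a b : A ⟶ X) (hab : ε ≫ a = ε ≫ b) : a = b := by
  induction hX with
  | @of X Y hX e =>
    have : a ≫ e.hom = b ≫ e.hom := by
      apply hi _ hX
      show ε ≫ a ≫ e.hom = ε ≫ b ≫ e.hom
      rw [← Category.assoc, hab, Category.assoc]
    calc a = (a ≫ e.hom) ≫ e.inv := by rw [Category.assoc, e.hom_inv_id, Category.comp_id]
    _ = (b ≫ e.hom) ≫ e.inv := by rw [this]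
    _ = b := by rw [Category.assoc, e.hom_inv_id, Category.comp_id]
  | zero hX => exact hX.eq_of_tgt a b
  | sum i₁ i₂ p₁ p₂ h₁ h₂ h₁₂ h₂₁ hid hX hY ihX ihY =>
    have hp₁ : a ≫ p₁ = b ≫ p₁ := ihX _ _ (by rw [← Category.assoc, ← Category.assoc, hab])
    have hp₂ : a ≫ p₂ = b ≫ p₂ := ihY _ _ (by rw [← Category.assoc, ← Category.assoc, hab])
    calc a = a ≫ (p₁ ≫ i₁ + p₂ ≫ i₂) := by rw [hid, Category.comp_id]
    _ = (a ≫ p₁) ≫ i₁ + (a ≫ p₂) ≫ i₂ := by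
        rw [Preadditive.comp_add, Category.assoc, Category.assoc]
    _ = (b ≫ p₁) ≫ i₁ + (b ≫ p₂) ≫ i₂ := by rw [hp₁, hp₂]
    _ = b := by
        rw [Category.assoc, Category.assoc, ← Preadditive.comp_add, hid, Category.comp_id]

/-- Every `Hom(M i, X)` with `X ∈ add S` factors through `ε i`. -/
lemma STower.factor (T : STower C S) (i : ℕ) {X : C} (hX : MemAddS C S X)
    (φ : T.M i ⟶ X) : ∃ g : T.N i ⟶ X, φ = T.ε i ≫ g := by
  refine MemAddS.factor (T.ε i) ?_ hX φ
  cases i with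
  | zero => exact T.surj
  | succ n => exact fun X hX => (T.bij (n + 1) (Nat.succ_le_succ (Nat.zero_le _)) X hX).2

/-- The maps of an `𝒮`-tower are "ghost" with respect to `add S`. -/
lemma STower.ghost (T : STower C S) (i : ℕ) {X : C} (hX : MemAddS C S X)
    (φ : T.M i ⟶ X) : T.f i ≫ φ = 0 := by
  obtain ⟨g, rfl⟩ := T.factor i hX φ
  rw [← Category.assoc]
  have : T.f i ≫ T.ε i = 0 := comp_distTriang_mor_zero₁₂ _ (T.tri i)
  rw [this, Limits.zero_comp]

end AuxLemmas

/-- Given two `𝒮`-towers `T`, `T'`, a morphism `g₀ : N₀ ⟶ N'₀`, and two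
families `(h, g)`, `(h', g')` of morphisms making all squares of the ladder diagram
commute and agreeing in degree `0`, the components `g i` for `i ≥ 1` coincide: they are
uniquely determined by `g 0`. -/
theorem stmt_3 {C : Type u} [Category.{v} C] [HasZeroObject C] [HasShift C ℤ]
    [Preadditive C] [∀ n : ℤ, (shiftFunctor C n).Additive] [Pretriangulated C]
    (S : Set C) (T T' : STower C S)
    (h h' : ∀ i, T.M i ⟶ T'.M i) (g g' : ∀ i, T.N i ⟶ T'.N i)
    (hsq : ∀ i, T.f i ≫ h i = h (i + 1) ≫ T'.f i)
    (hε : ∀ i, h i ≫ T'.ε i = T.ε i ≫ g i)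
    (hδ : ∀ i, g i ≫ T'.δ i = T.δ i ≫ (h (i + 1))⟦(1 : ℤ)⟧')
    (hsq' : ∀ i, T.f i ≫ h' i = h' (i + 1) ≫ T'.f i)
    (hε' : ∀ i, h' i ≫ T'.ε i = T.ε i ≫ g' i)
    (hδ' : ∀ i, g' i ≫ T'.δ i = T.δ i ≫ (h' (i + 1))⟦(1 : ℤ)⟧')
    (h0 : g 0 = g' 0) :
    ∀ i, 1 ≤ i → g i = g' i := by
  have key : ∀ i, g i = g' i := by
    intro i
    induction i with
    | zero => exact h0
    | succ n ih =>
      -- the shifted difference of the `h`'s is killed by `δ n`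
      set d : T.M (n + 1) ⟶ T'.M (n + 1) := h (n + 1) - h' (n + 1) with hd
      have hδ0 : T.δ n ≫ d⟦(1 : ℤ)⟧' = 0 := by
        have : (g n - g' n) ≫ T'.δ n = T.δ n ≫ d⟦(1 : ℤ)⟧' := by
          rw [hd, Functor.map_sub, Preadditive.sub_comp, Preadditive.comp_sub, hδ n, hδ' n]
        rw [← this, ih, sub_self, Limits.zero_comp]
      -- factor `d⟦1⟧` through `(f n)⟦1⟧` using the doubly rotated triangle
      obtain ⟨w, hw⟩ := Triangle.yoneda_exact₂ _
        (rot_of_distTriang _ (rot_of_distTriang _ (T.tri n))) (d⟦(1 : ℤ)⟧') hδ0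
      dsimp [Triangle.rotate] at hw
      set w₀ : T.M n ⟶ T'.M (n + 1) := (shiftFunctor C (1 : ℤ)).preimage w with hw₀
      have hwim : (shiftFunctor C (1 : ℤ)).map w₀ = w := (shiftFunctor C (1 : ℤ)).map_preimage w
      have hdw : d = -(T.f n ≫ w₀) := by
        apply (shiftFunctor C (1 : ℤ)).map_injective
        rw [Functor.map_neg, Functor.map_comp, hwim]
        refine hw.trans ?_
        exact Preadditive.neg_comp _ _
      -- hence `ε (n+1) ≫ (g (n+1) - g' (n+1)) = 0` by ghostness
      have hεdiff : T.ε (n + 1) ≫ (g (n + 1) - g' (n + 1)) = 0 := by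
        have h1 : T.ε (n + 1) ≫ (g (n + 1) - g' (n + 1)) = d ≫ T'.ε (n + 1) := by
          rw [hd, Preadditive.comp_sub, Preadditive.sub_comp, hε (n + 1), hε' (n + 1)]
        rw [h1, hdw, Preadditive.neg_comp, Category.assoc,
          T.ghost n (T'.mem_addS (n + 1)) (w₀ ≫ T'.ε (n + 1)), neg_zero]
      -- conclude by injectivity on `add S`
      have hinj : ∀ X ∈ S, Function.Injective fun q : T.N (n + 1) ⟶ X => T.ε (n + 1) ≫ q :=
        fun X hX => (T.bij (n + 1) (Nat.succ_le_succ (Nat.zero_le _)) X hX).1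
      refine MemAddS.cancel (T.ε (n + 1)) hinj (T'.mem_addS (n + 1)) _ _ ?_
      rw [← sub_eq_zero, ← Preadditive.comp_sub]
      exact hεdiff
  exact fun i _ => key i
end

section
/- Assume in addition that Hom(S, T[n]) = 0 for all S, T ∈ 𝒮 and all n < 0. Then for every 𝒮-tower M, the canonical map Hom(N_0, S) → Hom(M_0, S) given by precomposition with ε_0 is bijective for all S ∈ 𝒮. -/
open CategoryTheory CategoryTheory.Limits CategoryTheory.Pretriangulated

universe v u

/-- If moreover `Hom(X, Y⟦n⟧) = 0` for all `X, Y ∈ 𝒮` and `n < 0`, then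
for every `𝒮`-tower the canonical map `Hom(N₀, X) → Hom(M₀, X)` (precomposition with
`ε₀`) is bijective for all `X ∈ 𝒮`. -/
theorem stmt_4 {C : Type u} [Category.{v} C] [HasZeroObject C] [HasShift C ℤ]
    [Preadditive C] [∀ n : ℤ, (shiftFunctor C n).Additive] [Pretriangulated C]
    (S : Set C)
    (hneg : ∀ X ∈ S, ∀ Y ∈ S, ∀ n : ℤ, n < 0 → ∀ f : X ⟶ Y⟦n⟧, f = 0)
    (T : STower C S) (X : C) (hX : X ∈ S) :
    Function.Bijective fun g : T.N 0 ⟶ X => T.ε 0 ≫ g := by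
  -- Maps from objects of `add S` to negative shifts of objects of `S` vanish.
  have haddS : ∀ {Z : C}, MemAddS C S Z → ∀ n : ℤ, n < 0 → ∀ g : Z ⟶ X⟦n⟧, g = 0 := by
    intro Z hZ
    induction hZ with
    | of hY e =>
      intro n hn g
      have := hneg _ hY _ hX n hn (e.inv ≫ g)
      calc g = e.hom ≫ (e.inv ≫ g) := by simp
        _ = 0 := by rw [this]; simp
    | zero hZ => intro n hn g; exact hZ.eq_of_src g 0
    | sum i₁ i₂ p₁ p₂ h₁ h₂ h₁₂ h₂₁ hid hA hB ihA ihB =>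
      intro n hn g
      have : g = (p₁ ≫ i₁ + p₂ ≫ i₂) ≫ g := by rw [hid]; simp
      rw [this, Preadditive.add_comp, Category.assoc, Category.assoc,
        ihA n hn (i₁ ≫ g), ihB n hn (i₂ ≫ g)]
      simp
  -- Maps from `M i` to negative shifts of `X` vanish.
  obtain ⟨r, hr⟩ := T.bound
  have hM : ∀ d i, r ≤ i + d → ∀ n : ℤ, n < 0 → ∀ g : T.M i ⟶ X⟦n⟧, g = 0 := by
    intro d
    induction d with
    | zero => intro i hi n hn g; exact (hr i (by omega)).eq_of_src g 0
    | succ d ih =>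
      intro i hi n hn g
      have hfg : T.f i ≫ g = 0 := ih (i + 1) (by omega) n hn _
      obtain ⟨h, hh⟩ := Triangle.yoneda_exact₂ _ (T.tri i) g hfg
      rw [hh, haddS (T.mem_addS i) n hn h]; exact Limits.comp_zero
  constructor
  · -- injectivity
    intro g₁ g₂ hg
    simp only at hg
    have h0 : T.ε 0 ≫ (g₁ - g₂) = 0 := by
      rw [Preadditive.comp_sub, hg, sub_self]
    obtain ⟨h, hh⟩ := Triangle.yoneda_exact₃ _ (T.tri 0) (g₁ - g₂) h0
    -- `h : (M 1)⟦1⟧ ⟶ X`; show it vanishes using `hM`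
    have e : ((X⟦(-1 : ℤ)⟧)⟦(1 : ℤ)⟧) ≅ X :=
      (shiftFunctorCompIsoId C (-1 : ℤ) (1 : ℤ) (by ring)).app X
    obtain ⟨k, hk⟩ := (shiftFunctor C (1 : ℤ)).map_surjective (h ≫ e.inv)
    have hk0 : k = 0 := hM (r + 1) 1 (by omega) (-1) (by omega) k
    have hzero : h = 0 := by
      have : h ≫ e.inv = 0 := by rw [← hk, hk0, Functor.map_zero]
      calc h = (h ≫ e.inv) ≫ e.hom := by simp
        _ = 0 := by rw [this]; simp
    have : g₁ - g₂ = 0 := by rw [hh, hzero]; exact Limits.comp_zero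
    exact sub_eq_zero.mp this
  · exact T.surj X hX
end

section
/- Let f, f' : M → N be two surjective homomorphisms of A-modules with f ∼ f' (i.e., f − f' is a projective map). Then there exists an automorphism σ of M with f' = f ∘ σ and σ ∼ id_M. Similarly, if f, f' : N → M are two injective homomorphisms with f ∼ f', then there exists an automorphism σ of M with f' = σ ∘ f and σ ∼ id_M. -/
noncomputable section

section Defs

variable (k A : Type) [Field k] [Ring A] [Algebra k A]

/-- The `A`-linear endomorphism of an `A`-module given by the action of the central
element `algebraMap k A c`, i.e. "`c • id`". -/
def algSmul {M : Type} [AddCommGroup M] [Module A M] (c : k) : M →ₗ[A] M where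
  toFun x := algebraMap k A c • x
  map_add' x y := smul_add _ x y
  map_smul' a x := by
    simp only [RingHom.id_apply, smul_smul]
    rw [Algebra.commutes c a]

/-- A homomorphism of `A`-modules is *projective* if it factors through a projective
`A`-module. -/
def IsProjMap {M N : Type} [AddCommGroup M] [Module A M] [AddCommGroup N] [Module A N]
    (f : M →ₗ[A] N) : Prop :=
  ∃ P : ModuleCat.{0} A, Module.Projective A P ∧
    ∃ (g : M →ₗ[A] P) (h : (P : Type) →ₗ[A] N), f = h.comp g

/-- `A` is split: the endomorphism ring of every simple `A`-module is `k`. -/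
def IsSplitAlgebra : Prop :=
  ∀ (V : Type) [AddCommGroup V] [Module A V], IsSimpleModule A V →
    ∀ f : V →ₗ[A] V, ∃ c : k, f = algSmul k A c

/-- `A` has no projective simple module. -/
def NoProjectiveSimple : Prop :=
  ∀ (V : Type) [AddCommGroup V] [Module A V], IsSimpleModule A V →
    ¬ Module.Projective A V

/-- An indecomposable module: nonzero, and with no nontrivial direct sum decomposition. -/
def IsIndecModule (M : Type) [AddCommGroup M] [Module A M] : Prop :=
  Nontrivial M ∧ ∀ N P : Submodule A M, IsCompl N P → N = ⊥ ∨ P = ⊥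

variable {ι : Type} (S : ι → Type) [∀ i, AddCommGroup (S i)] [∀ i, Module A (S i)]

/-- `X ∈ add 𝒮` : `X` is isomorphic to a finite direct sum of members of `𝒮`. -/
def InAddS (X : Type) [AddCommGroup X] [Module A X] : Prop :=
  ∃ (n : ℕ) (c : Fin n → ι), Nonempty (X ≃ₗ[A] ((j : Fin n) → S (c j)))

/-- `M` is filtrable: it has a finite filtration with successive quotients in `add 𝒮`. -/
def IsFiltrable (M : Type) [AddCommGroup M] [Module A M] : Prop :=
  ∃ (r : ℕ) (F : ℕ → Submodule A M),
    F 0 = ⊤ ∧ F r = ⊥ ∧ (∀ i, F (i + 1) ≤ F i) ∧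
    ∀ i < r, InAddS A S (↥(F i) ⧸ (F (i + 1)).comap (F i).subtype)

/-- `M` has no projective remainder: no decomposition `M = N ⊕ P` with `P` nonzero
projective and `N` filtrable. -/
def NoProjRemainder (M : Type) [AddCommGroup M] [Module A M] : Prop :=
  ¬ ∃ N P : Submodule A M, IsCompl N P ∧ Module.Projective A P ∧ P ≠ ⊥ ∧
      IsFiltrable A S ↥N

/-- The standing hypotheses on the finite set `𝒮`: its members are finitely generated
indecomposable modules with `Hom_{A-stab}(S,T) = k^{δ_{S,T}}`. -/
def SGood : Prop :=
  (∀ i, IsIndecModule A (S i)) ∧ (∀ i, Module.Finite A (S i)) ∧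
  (∀ i j, i ≠ j → ∀ f : S i →ₗ[A] S j, IsProjMap A f) ∧
  ∀ i, ∀ f : S i →ₗ[A] S i, ∃! c : k, IsProjMap A (f - algSmul k A c)

/-- Stable isomorphism of modules : `M ⊕ P ≅ N ⊕ Q` with `P`, `Q` projective. -/
def StablyIso (M N : Type) [AddCommGroup M] [Module A M] [AddCommGroup N] [Module A N] : Prop :=
  ∃ P Q : ModuleCat.{0} A, Module.Projective A P ∧ Module.Projective A Q ∧
    Nonempty ((M × P) ≃ₗ[A] (N × Q))

end Defs

section Aux

variable {k A : Type} [Field k] [Ring A] [Algebra k A]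
variable {M N : Type} [AddCommGroup M] [Module A M] [AddCommGroup N] [Module A N]

lemma isProjMap_factor {W : Type} [AddCommGroup W] [Module A W] (hW : Module.Projective A W)
    (g : M →ₗ[A] W) (h : W →ₗ[A] N) {φ : M →ₗ[A] N} (hφ : φ = h.comp g) : IsProjMap A φ :=
  ⟨ModuleCat.of A W, hW, g, h, hφ⟩

lemma IsProjMap.add' {φ ψ : M →ₗ[A] N} (hφ : IsProjMap A φ) (hψ : IsProjMap A ψ) :
    IsProjMap A (φ + ψ) := by
  obtain ⟨P, hP, g, h, rfl⟩ := hφ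
  obtain ⟨P', hP', g', h', rfl⟩ := hψ
  letI := hP
  letI := hP'
  refine isProjMap_factor (W := P × P') inferInstance (g.prod g')
    ((h.comp (LinearMap.fst A P P')) + (h'.comp (LinearMap.snd A P P'))) ?_
  ext x
  simp

lemma injective_pi [Module.Injective A A] (ι : Type) : Module.Injective A (ι → A) := by
  constructor
  intro X Y _ _ _ _ f hf g
  have H : ∀ t : ι, ∃ h : Y →ₗ[A] A, ∀ x, h (f x) = ((LinearMap.proj t).comp g) x :=
    fun t => Module.Injective.out f hf ((LinearMap.proj t).comp g)
  choose h hh using H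
  refine ⟨LinearMap.pi h, fun x => ?_⟩
  ext t
  exact hh t x

lemma injective_retract {Z W : Type} [AddCommGroup Z] [Module A Z] [AddCommGroup W] [Module A W]
    [Module.Injective A Z] (i : W →ₗ[A] Z) (r : Z →ₗ[A] W) (hri : r.comp i = LinearMap.id) :
    Module.Injective A W := by
  constructor
  intro X Y _ _ _ _ f hf g
  obtain ⟨h, hh⟩ := Module.Injective.out f hf (i.comp g)
  refine ⟨r.comp h, fun x => ?_⟩
  simp only [LinearMap.comp_apply, hh x]
  simpa using DFunLike.congr_fun hri (g x)

lemma injective_of_fg_projective [Module.Injective A A] {W : Type} [AddCommGroup W] [Module A W]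
    [Module.Finite A W] (hW : Module.Projective A W) : Module.Injective A W := by
  obtain ⟨m, π, hπ⟩ := Module.Finite.exists_fin' A W
  letI := hW
  obtain ⟨s, hs⟩ := Module.projective_lifting_property π LinearMap.id hπ
  haveI := injective_pi (A := A) (Fin m)
  exact injective_retract s π hs

/-- A projective map out of a finitely generated module factors through a finite free module. -/
lemma isProjMap_factor_pi {φ : M →ₗ[A] N} [Module.Finite A M] (hφ : IsProjMap A φ) :
    ∃ (T : Type) (_ : Fintype T) (g : M →ₗ[A] (T → A)) (h : (T → A) →ₗ[A] N),
      φ = h.comp g := by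
  classical
  obtain ⟨P, hP, g, h, rfl⟩ := hφ
  letI := hP
  obtain ⟨s, hs⟩ := (Module.projective_def.mp hP)
  obtain ⟨S, hSspan⟩ := Module.Finite.fg_top (R := A) (M := M)
  set T : Finset P := S.biUnion (fun x => (s (g x)).support) with hT
  have hsupp : ∀ x : M, s (g x) ∈ Finsupp.supported A A (T : Set P) := by
    have hle : (⊤ : Submodule A M) ≤
        Submodule.comap (s.comp g) (Finsupp.supported A A (T : Set P)) := by
      rw [← hSspan]
      rw [Submodule.span_le]
      intro x hx
      simp only [SetLike.mem_coe, Submodule.mem_comap, LinearMap.comp_apply]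
      rw [Finsupp.mem_supported]
      intro p hp
      rw [Finset.mem_coe, hT]
      exact Finset.mem_biUnion.mpr ⟨x, Finset.mem_coe.mp hx, Finset.mem_coe.mp hp⟩
    intro x
    exact hle (Submodule.mem_top (R := A) (x := x))
  refine ⟨↥T, inferInstance, LinearMap.pi (fun t => (Finsupp.lapply (t : P)).comp (s.comp g)),
    (h.comp (Finsupp.linearCombination A _root_.id)).comp
      (∑ t : ↥T, (Finsupp.lsingle (t : P)).comp (LinearMap.proj t)), ?_⟩
  ext x
  simp only [LinearMap.comp_apply]
  have hemb : (∑ t : ↥T, (Finsupp.lsingle (R := A) (t : P)).comp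
      (LinearMap.proj (R := A) (φ := fun _ : ↥T => A) t))
      ((LinearMap.pi (fun t : ↥T => (Finsupp.lapply (t : P)).comp (s.comp g))) x)
      = s (g x) := by
    simp only [LinearMap.sum_apply, LinearMap.comp_apply, LinearMap.proj_apply,
      LinearMap.pi_apply, Finsupp.lapply_apply, Finsupp.lsingle_apply]
    rw [Finset.sum_coe_sort T (fun p => Finsupp.single p ((s (g x)) p))]
    have hsub : (s (g x)).support ⊆ T := by
      have := hsupp x
      rwa [Finsupp.mem_supported] at this
    rw [← Finset.sum_subset hsub (fun p _ hp => by
      rw [Finsupp.notMem_support_iff.mp hp, Finsupp.single_zero])]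
    exact Finsupp.sum_single (s (g x))
  rw [hemb, hs (g x)]

lemma ker_pow_mono (σ : Module.End A M) {i j : ℕ} (hij : i ≤ j) :
    LinearMap.ker (σ ^ i) ≤ LinearMap.ker (σ ^ j) := by
  obtain ⟨l, rfl⟩ := Nat.exists_eq_add_of_le hij
  intro x hx
  rw [LinearMap.mem_ker] at hx ⊢
  rw [add_comm, pow_add, Module.End.mul_apply, hx, map_zero]

lemma range_pow_anti (σ : Module.End A M) {i j : ℕ} (hij : i ≤ j) :
    LinearMap.range (σ ^ j) ≤ LinearMap.range (σ ^ i) := by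
  obtain ⟨l, rfl⟩ := Nat.exists_eq_add_of_le hij
  rintro x ⟨y, rfl⟩
  exact ⟨(σ ^ l) y, by rw [pow_add, Module.End.mul_apply]⟩

lemma exists_fitting [IsNoetherian A M] [IsArtinian A M] (σ : Module.End A M) :
    ∃ n, 0 < n ∧ ∀ m, n ≤ m →
      LinearMap.ker (σ ^ m) = LinearMap.ker (σ ^ n) ∧
      LinearMap.range (σ ^ m) = LinearMap.range (σ ^ n) := by
  obtain ⟨n₁, h₁⟩ := monotone_stabilizes_iff_noetherian.mpr ‹_›
    ⟨fun m => LinearMap.ker (σ ^ m), fun i j hij => ker_pow_mono σ hij⟩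
  obtain ⟨n₂, h₂⟩ := IsArtinian.monotone_stabilizes
    (⟨fun m => OrderDual.toDual (LinearMap.range (σ ^ m)),
      fun i j hij => range_pow_anti σ hij⟩ : ℕ →o (Submodule A M)ᵒᵈ)
  refine ⟨n₁ + n₂ + 1, Nat.succ_pos _, fun m hm => ⟨?_, ?_⟩⟩
  · have e1 := h₁ m (le_trans (by omega) hm)
    have e2 := h₁ (n₁ + n₂ + 1) (by omega)
    exact (e1.symm.trans e2 : _)
  · have e1 := h₂ m (le_trans (by omega) hm)
    have e2 := h₂ (n₁ + n₂ + 1) (by omega)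
    exact congrArg OrderDual.ofDual (e1.symm.trans e2)

end Aux

section MainSurj

variable {k A : Type} [Field k] [Ring A] [Algebra k A]
variable {M N : Type} [AddCommGroup M] [Module A M] [AddCommGroup N] [Module A N]
variable [Module k M] [IsScalarTower k A M] [FiniteDimensional k M]
variable [IsNoetherian A M] [IsArtinian A M]

lemma main_surj (f f' : M →ₗ[A] N) (hf' : Function.Surjective f') :
    ∀ (d : ℕ) (σ : Module.End A M), f.comp σ = f' → IsProjMap A (σ - LinearMap.id) →
      (∃ n, 0 < n ∧ (∀ m, n ≤ m → LinearMap.ker (σ ^ m) = LinearMap.ker (σ ^ n) ∧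
          LinearMap.range (σ ^ m) = LinearMap.range (σ ^ n)) ∧
        Module.finrank k ↥(LinearMap.ker (σ ^ n)) ≤ d) →
      ∃ e : M ≃ₗ[A] M, f' = f.comp e.toLinearMap ∧
        IsProjMap A (e.toLinearMap - LinearMap.id) := by
  intro d
  induction d using Nat.strong_induction_on with
  | _ d IH =>
  rintro σ hσf hσproj ⟨n, hn0, hstab, hdim⟩
  by_cases hK : LinearMap.ker (σ ^ n) = ⊥
  · have hinj : Function.Injective σ := by
      rw [← LinearMap.ker_eq_bot, eq_bot_iff]
      intro x hx
      have h1 : x ∈ LinearMap.ker (σ ^ 1) := by rwa [pow_one]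
      have h2 := ker_pow_mono σ hn0 h1
      rw [hK] at h2
      exact h2
    have hsurj : Function.Surjective σ := by
      have h2 : Function.Injective (σ.restrictScalars k) := hinj
      exact LinearMap.injective_iff_surjective.mp h2
    have heq : (LinearEquiv.ofBijective σ ⟨hinj, hsurj⟩).toLinearMap = σ := by
      ext x; rfl
    refine ⟨LinearEquiv.ofBijective σ ⟨hinj, hsurj⟩, ?_, ?_⟩
    · rw [heq, hσf]
    · rw [heq]; exact hσproj
  · -- inductive step
    have hker2 : LinearMap.ker (σ ^ (n + n)) = LinearMap.ker (σ ^ n) := (hstab (n + n) (by omega)).1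
    set K := LinearMap.ker (σ ^ n) with hKdef
    set I := LinearMap.range (σ ^ n) with hIdef
    have hcompl : IsCompl K I := by
      constructor
      · rw [Submodule.disjoint_def]
        intro x hxK hxI
        obtain ⟨y, rfl⟩ := hxI
        have hy : y ∈ LinearMap.ker (σ ^ (n + n)) := by
          rw [LinearMap.mem_ker, pow_add, Module.End.mul_apply]
          exact LinearMap.mem_ker.mp hxK
        rw [hker2] at hy
        exact LinearMap.mem_ker.mp hy
      · rw [codisjoint_iff, eq_top_iff]
        intro x _
        have h1 : (σ ^ n) x ∈ LinearMap.range (σ ^ (n + n)) := by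
          rw [(hstab (n + n) (by omega)).2]
          exact ⟨x, rfl⟩
        obtain ⟨y, hy⟩ := h1
        have h2 : (σ ^ n) ((σ ^ n) y) = (σ ^ n) x := by
          rw [← Module.End.mul_apply, ← pow_add]
          exact hy
        refine Submodule.mem_sup.mpr ⟨x - (σ ^ n) y, ?_, (σ ^ n) y, ⟨y, rfl⟩, by abel⟩
        rw [hKdef, LinearMap.mem_ker, map_sub, h2, sub_self]
    have hcomm : ∀ x : M, (σ ^ n) (σ x) = σ ((σ ^ n) x) := by
      intro x
      rw [← Module.End.mul_apply, ← pow_succ, pow_succ', Module.End.mul_apply]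
    have hσK : ∀ x ∈ K, σ x ∈ K := by
      intro x hx
      rw [hKdef, LinearMap.mem_ker] at hx ⊢
      rw [hcomm, hx, map_zero]
    have hσI : ∀ x ∈ I, σ x ∈ I := by
      rintro x ⟨y, rfl⟩
      exact ⟨σ y, hcomm y⟩
    set q : M →ₗ[A] ↥K := Submodule.linearProjOfIsCompl K I hcompl with hqdef
    set ι : ↥K →ₗ[A] M := K.subtype with hιdef
    have hqι : ∀ x : ↥K, q (ι x) = x := fun x => Submodule.linearProjOfIsCompl_apply_left hcompl x
    have hqI : ∀ x ∈ I, q x = 0 := fun x hx =>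
      Submodule.linearProjOfIsCompl_apply_right' hcompl hx
    have hιq : ∀ x ∈ K, ι (q x) = x := by
      intro x hx
      have h4 : q x = ⟨x, hx⟩ := Submodule.linearProjOfIsCompl_apply_left hcompl ⟨x, hx⟩
      rw [h4]
      rfl
    have hresid : ∀ x : M, x - ι (q x) ∈ I := by
      intro x
      have h0 : q (x - ι (q x)) = 0 := by
        rw [map_sub, hqι (q x), sub_self]
      rwa [← Submodule.linearProjOfIsCompl_apply_eq_zero_iff hcompl]
    set a : Module.End A ↥K := q ∘ₗ (σ ∘ₗ ι) with hadef
    have hσι : ∀ x : ↥K, σ (ι x) = ι (a x) := by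
      intro x
      have hmem : σ (ι x) ∈ K := hσK _ x.2
      exact (hιq _ hmem).symm
    have hpow_ι : ∀ (m : ℕ) (x : ↥K), (σ ^ m) (ι x) = ι ((a ^ m) x) := by
      intro m
      induction m with
      | zero => intro x; simp
      | succ m ih =>
        intro x
        rw [pow_succ', Module.End.mul_apply, ih x, hσι, pow_succ', Module.End.mul_apply]
    have han : a ^ n = 0 := by
      refine LinearMap.ext fun x => ?_
      have h0 : ι ((a ^ n) x) = 0 := by
        rw [← hpow_ι n x]
        exact LinearMap.mem_ker.mp x.2
      rw [LinearMap.zero_apply]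
      exact Subtype.ext h0
    set b : Module.End A ↥K := ∑ i ∈ Finset.range n, a ^ i with hbdef
    have hb : b * (1 - a) = 1 := by
      have hgs := geom_sum_mul a n
      have h2 : b * (1 - a) = -(b * (a - 1)) := by
        rw [mul_sub, mul_sub, mul_one]
        abel
      rw [h2, hbdef, hgs, han]
      simp
    obtain ⟨P₁, hP₁, g₁, h₁, hτ⟩ := hσproj
    letI := hP₁
    have hqh : ∀ x : ↥K, q (h₁ (g₁ (ι x))) = a x - x := by
      intro x
      have h5 := DFunLike.congr_fun hτ (ι x)
      rw [LinearMap.sub_apply, LinearMap.id_apply, LinearMap.comp_apply] at h5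
      rw [← h5, map_sub, hσι x, hqι, hqι]
    have hKsplit : Module.Projective A ↥K := by
      refine Module.Projective.of_split (g₁.comp ι) ((-b).comp (q.comp h₁)) ?_
      refine LinearMap.ext fun x => ?_
      simp only [LinearMap.comp_apply, LinearMap.neg_apply, LinearMap.id_apply]
      rw [hqh x]
      have h6 := DFunLike.congr_fun hb x
      rw [Module.End.mul_apply, Module.End.one_apply] at h6
      have h7 : a x - x = -((1 - a) x) := by
        simp [LinearMap.sub_apply]
      rw [h7, map_neg, neg_neg, h6]
    have hqσ : ∀ m : M, q (σ m) = a (q m) := by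
      intro m
      have hdec : σ m = σ (ι (q m)) + σ (m - ι (q m)) := by
        rw [← map_add]
        congr 1
        abel
      rw [hdec, map_add, hσι, hqι, hqI _ (hσI _ (hresid m)), add_zero]
    have hΨ : Function.Surjective ((q.comp (LinearMap.ker f).subtype).coprod a) := by
      intro x
      obtain ⟨m₀, hm₀⟩ := hf' (f (ι x))
      have hfm : f (σ m₀) = f (ι x) := by
        have h8 := DFunLike.congr_fun hσf m₀
        rw [LinearMap.comp_apply] at h8
        rw [h8, hm₀]
      have hw : ι x - σ m₀ ∈ LinearMap.ker f := by
        rw [LinearMap.mem_ker, map_sub, hfm, sub_self]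
      refine ⟨(⟨ι x - σ m₀, hw⟩, q m₀), ?_⟩
      have h9 : q (ι x - σ m₀) = x - a (q m₀) := by
        rw [map_sub, hqι, hqσ]
      show q (ι x - σ m₀) + a (q m₀) = x
      rw [h9, sub_add_cancel]
    letI := hKsplit
    obtain ⟨χ, hχ⟩ := Module.projective_lifting_property
      ((q.comp (LinearMap.ker f).subtype).coprod a) LinearMap.id hΨ
    set s₀ : ↥K →ₗ[A] ↥(LinearMap.ker f) := (LinearMap.fst A _ _).comp χ with hs₀def
    set r : Module.End A ↥K := (LinearMap.snd A _ _).comp χ with hrdef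
    have hid : ∀ x : ↥K, q ((LinearMap.ker f).subtype (s₀ x)) + a (r x) = x := by
      intro x
      have h10 := DFunLike.congr_fun hχ x
      rw [LinearMap.comp_apply, LinearMap.id_apply] at h10
      conv_rhs => rw [← h10]
      rw [hs₀def, hrdef]
      simp only [LinearMap.coprod_apply, LinearMap.comp_apply, LinearMap.fst_apply,
        LinearMap.snd_apply]
    set st : Module.End A ↥K := q ∘ₗ ((LinearMap.ker f).subtype ∘ₗ s₀) with hstdef
    have hst : st = 1 - a * r := by
      refine LinearMap.ext fun x => ?_
      simp only [hstdef, LinearMap.comp_apply, LinearMap.sub_apply, Module.End.one_apply,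
        Module.End.mul_apply]
      exact eq_sub_of_add_eq (hid x)
    set u : Module.End A ↥K := a + st with hudef
    haveI fdK : FiniteDimensional k ↥K := FiniteDimensional.of_injective
      ((K.subtype).restrictScalars k) Subtype.val_injective
    have hnotnil : ¬ IsNilpotent u := by
      rintro ⟨m, hm⟩
      have h1u : (1 : Module.End A ↥K) - u = -(a * (1 - r)) := by
        rw [hudef, hst, mul_sub, mul_one]
        abel
      have hunit : IsUnit (a * (1 - r)) := by
        have h11 := IsNilpotent.isUnit_one_sub (⟨m, hm⟩ : IsNilpotent u)
        rw [h1u] at h11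
        exact (IsUnit.neg_iff _).mp h11
      obtain ⟨v, hv⟩ := hunit.exists_right_inv
      have hasurj : Function.Surjective a := by
        intro y
        refine ⟨((1 - r) * v) y, ?_⟩
        have h12 : a * ((1 - r) * v) = 1 := by rw [← mul_assoc, hv]
        have h13 := DFunLike.congr_fun h12 y
        rw [Module.End.mul_apply, Module.End.one_apply] at h13
        exact h13
      have hainj : Function.Injective a := by
        have h14 : Function.Surjective (a.restrictScalars k) := hasurj
        exact LinearMap.injective_iff_surjective.mpr h14
      have hKnontriv : Nontrivial ↥K := Submodule.nontrivial_iff_ne_bot.mpr hK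
      obtain ⟨x0, y0, hxy⟩ := hKnontriv
      apply hxy
      have hinj_n : Function.Injective ⇑(a ^ n) := by
        rw [Module.End.coe_pow]
        exact Function.Injective.iterate hainj n
      apply hinj_n
      rw [han]
      rfl
    set e1 : ↥K →ₗ[A] M := (LinearMap.ker f).subtype ∘ₗ s₀ with he1def
    set σ' : Module.End A M := σ + e1 ∘ₗ q with hσ'def
    have hfσ' : f.comp σ' = f' := by
      ext m
      rw [LinearMap.comp_apply, hσ'def, LinearMap.add_apply, map_add, LinearMap.comp_apply]
      have h0 : f (e1 (q m)) = 0 := (s₀ (q m)).2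
      rw [h0, add_zero]
      have h15 := DFunLike.congr_fun hσf m
      rw [LinearMap.comp_apply] at h15
      exact h15
    have hproj' : IsProjMap A (σ' - LinearMap.id) := by
      have hsplit : σ' - LinearMap.id = (σ - LinearMap.id) + e1 ∘ₗ q := by
        rw [hσ'def]; abel
      rw [hsplit]
      exact IsProjMap.add' ⟨P₁, hP₁, g₁, h₁, hτ⟩ (isProjMap_factor hKsplit q e1 rfl)
    have hqσ' : ∀ m, q (σ' m) = u (q m) := by
      intro m
      rw [hσ'def]
      simp only [LinearMap.add_apply, LinearMap.comp_apply, map_add]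
      rw [hqσ m, hudef, LinearMap.add_apply]
      congr 1
    have hqσ'pow : ∀ (m : ℕ) (x : M), q ((σ' ^ m) x) = (u ^ m) (q x) := by
      intro m
      induction m with
      | zero => intro x; simp
      | succ m ih =>
        intro x
        rw [pow_succ, Module.End.mul_apply, ih (σ' x), hqσ' x, pow_succ, Module.End.mul_apply]
    have hσ'I : ∀ (m : ℕ) (x : M), x ∈ I → (σ' ^ m) x = (σ ^ m) x ∧ (σ ^ m) x ∈ I := by
      intro m
      induction m with
      | zero => intro x hx; exact ⟨rfl, hx⟩
      | succ m ih =>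
        intro x hx
        have hσ'x : σ' x = σ x := by
          rw [hσ'def, LinearMap.add_apply, LinearMap.comp_apply, hqI x hx, map_zero, add_zero]
        constructor
        · rw [pow_succ, Module.End.mul_apply, hσ'x, (ih (σ x) (hσI x hx)).1,
            pow_succ, Module.End.mul_apply]
        · rw [pow_succ, Module.End.mul_apply]
          exact (ih (σ x) (hσI x hx)).2
    obtain ⟨n', hn0', hstab'⟩ := exists_fitting σ'
    set m1 := n + n' with hm1def
    have hkerm : LinearMap.ker (σ' ^ m1) = LinearMap.ker (σ' ^ n') := (hstab' m1 (by omega)).1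
    set ut : ↥K →ₗ[k] ↥K := (u ^ m1 : Module.End A ↥K).restrictScalars k with hutdef
    have hmem2 : ∀ x : ↥(LinearMap.ker (σ' ^ m1)),
        ((q.comp (LinearMap.ker (σ' ^ m1)).subtype).restrictScalars k) x ∈ LinearMap.ker ut := by
      intro x
      rw [LinearMap.mem_ker]
      show (u ^ m1) (q ↑x) = 0
      rw [← hqσ'pow m1 ↑x, LinearMap.mem_ker.mp x.2, map_zero]
    set χ₂ := LinearMap.codRestrict (LinearMap.ker ut)
      ((q.comp (LinearMap.ker (σ' ^ m1)).subtype).restrictScalars k) hmem2 with hχ₂def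
    have hχ₂inj : Function.Injective χ₂ := by
      intro x y hxy
      have hq : q ↑x = q ↑y := congrArg Subtype.val hxy
      have hdiff_mem : (↑x - ↑y : M) ∈ LinearMap.ker (σ' ^ m1) := sub_mem x.2 y.2
      have hdiffI : (↑x - ↑y : M) ∈ I := by
        have h0 : q ((↑x : M) - ↑y) = 0 := by rw [map_sub, hq, sub_self]
        rwa [← Submodule.linearProjOfIsCompl_apply_eq_zero_iff hcompl]
      have h1 : (σ ^ m1) ((↑x : M) - ↑y) = 0 := by
        rw [← (hσ'I m1 _ hdiffI).1]
        exact LinearMap.mem_ker.mp hdiff_mem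
      have h2 : ((↑x : M) - ↑y) ∈ K := by
        rw [← (hstab m1 (by omega)).1]
        exact LinearMap.mem_ker.mpr h1
      have h3 : ((↑x : M) - ↑y) = 0 := by
        have h16 := hcompl.disjoint
        rw [Submodule.disjoint_def] at h16
        exact h16 _ h2 hdiffI
      exact Subtype.ext (sub_eq_zero.mp h3)
    haveI fdker : FiniteDimensional k ↥(LinearMap.ker (σ' ^ m1)) :=
      FiniteDimensional.of_injective
        (((LinearMap.ker (σ' ^ m1)).subtype).restrictScalars k) Subtype.val_injective
    have hd2 : Module.finrank k ↥(LinearMap.ker (σ' ^ m1)) ≤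
        Module.finrank k ↥(LinearMap.ker ut) :=
      LinearMap.finrank_le_finrank_of_injective hχ₂inj
    have hd3 := LinearMap.finrank_range_add_finrank_ker ut
    have hd4 : 0 < Module.finrank k ↥(LinearMap.range ut) := by
      have hune : u ^ m1 ≠ 0 := fun h => hnotnil ⟨m1, h⟩
      obtain ⟨x0, hx0⟩ : ∃ x0 : ↥K, (u ^ m1) x0 ≠ 0 := by
        by_contra hc
        push_neg at hc
        exact hune (by ext z; simpa using hc z)
      have hnt : Nontrivial ↥(LinearMap.range ut) := by
        refine ⟨⟨⟨ut x0, LinearMap.mem_range_self ut x0⟩, 0, ?_⟩⟩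
        intro hcon
        apply hx0
        have h17 := congrArg Subtype.val hcon
        exact h17
      exact Module.finrank_pos_iff.mpr hnt
    have hKpos : 0 < Module.finrank k ↥K := by
      have hnt : Nontrivial ↥K := Submodule.nontrivial_iff_ne_bot.mpr hK
      exact Module.finrank_pos_iff.mpr hnt
    refine IH (Module.finrank k ↥K - 1) (by omega) σ' hfσ' hproj' ⟨n', hn0', hstab', ?_⟩
    have hfr : Module.finrank k ↥(LinearMap.ker (σ' ^ n')) =
        Module.finrank k ↥(LinearMap.ker (σ' ^ m1)) := by
      rw [hkerm]
    omega

end MainSurj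

section MainInj

variable {k A : Type} [Field k] [Ring A] [Algebra k A]
variable {M N : Type} [AddCommGroup M] [Module A M] [AddCommGroup N] [Module A N]
variable [Module k M] [IsScalarTower k A M] [FiniteDimensional k M]
variable [IsNoetherian A M] [IsArtinian A M]

lemma main_inj [Module.Injective A A] (f f' : N →ₗ[A] M) (hf' : Function.Injective f') :
    ∀ (d : ℕ) (σ : Module.End A M), (σ : M →ₗ[A] M).comp f = f' → IsProjMap A (σ - LinearMap.id) →
      (∃ n, 0 < n ∧ (∀ m, n ≤ m → LinearMap.ker (σ ^ m) = LinearMap.ker (σ ^ n) ∧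
          LinearMap.range (σ ^ m) = LinearMap.range (σ ^ n)) ∧
        Module.finrank k ↥(LinearMap.ker (σ ^ n)) ≤ d) →
      ∃ e : M ≃ₗ[A] M, f' = e.toLinearMap.comp f ∧
        IsProjMap A (e.toLinearMap - LinearMap.id) := by
  intro d
  induction d using Nat.strong_induction_on with
  | _ d IH =>
  rintro σ hσf hσproj ⟨n, hn0, hstab, hdim⟩
  by_cases hK : LinearMap.ker (σ ^ n) = ⊥
  · have hinj : Function.Injective σ := by
      rw [← LinearMap.ker_eq_bot, eq_bot_iff]
      intro x hx
      have h1 : x ∈ LinearMap.ker (σ ^ 1) := by rwa [pow_one]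
      have h2 := ker_pow_mono σ hn0 h1
      rw [hK] at h2
      exact h2
    have hsurj : Function.Surjective σ := by
      have h2 : Function.Injective (σ.restrictScalars k) := hinj
      exact LinearMap.injective_iff_surjective.mp h2
    have heq : (LinearEquiv.ofBijective σ ⟨hinj, hsurj⟩).toLinearMap = σ := by
      ext x; rfl
    refine ⟨LinearEquiv.ofBijective σ ⟨hinj, hsurj⟩, ?_, ?_⟩
    · rw [heq, hσf]
    · rw [heq]; exact hσproj
  · -- inductive step
    have hker2 : LinearMap.ker (σ ^ (n + n)) = LinearMap.ker (σ ^ n) := (hstab (n + n) (by omega)).1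
    set K := LinearMap.ker (σ ^ n) with hKdef
    set I := LinearMap.range (σ ^ n) with hIdef
    have hcompl : IsCompl K I := by
      constructor
      · rw [Submodule.disjoint_def]
        intro x hxK hxI
        obtain ⟨y, rfl⟩ := hxI
        have hy : y ∈ LinearMap.ker (σ ^ (n + n)) := by
          rw [LinearMap.mem_ker, pow_add, Module.End.mul_apply]
          exact LinearMap.mem_ker.mp hxK
        rw [hker2] at hy
        exact LinearMap.mem_ker.mp hy
      · rw [codisjoint_iff, eq_top_iff]
        intro x _
        have h1 : (σ ^ n) x ∈ LinearMap.range (σ ^ (n + n)) := by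
          rw [(hstab (n + n) (by omega)).2]
          exact ⟨x, rfl⟩
        obtain ⟨y, hy⟩ := h1
        have h2 : (σ ^ n) ((σ ^ n) y) = (σ ^ n) x := by
          rw [← Module.End.mul_apply, ← pow_add]
          exact hy
        refine Submodule.mem_sup.mpr ⟨x - (σ ^ n) y, ?_, (σ ^ n) y, ⟨y, rfl⟩, by abel⟩
        rw [hKdef, LinearMap.mem_ker, map_sub, h2, sub_self]
    have hcomm : ∀ x : M, (σ ^ n) (σ x) = σ ((σ ^ n) x) := by
      intro x
      rw [← Module.End.mul_apply, ← pow_succ, pow_succ', Module.End.mul_apply]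
    have hσK : ∀ x ∈ K, σ x ∈ K := by
      intro x hx
      rw [hKdef, LinearMap.mem_ker] at hx ⊢
      rw [hcomm, hx, map_zero]
    have hσI : ∀ x ∈ I, σ x ∈ I := by
      rintro x ⟨y, rfl⟩
      exact ⟨σ y, hcomm y⟩
    set q : M →ₗ[A] ↥K := Submodule.linearProjOfIsCompl K I hcompl with hqdef
    set ι : ↥K →ₗ[A] M := K.subtype with hιdef
    have hqι : ∀ x : ↥K, q (ι x) = x := fun x => Submodule.linearProjOfIsCompl_apply_left hcompl x
    have hqI : ∀ x ∈ I, q x = 0 := fun x hx =>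
      Submodule.linearProjOfIsCompl_apply_right' hcompl hx
    have hιq : ∀ x ∈ K, ι (q x) = x := by
      intro x hx
      have h4 : q x = ⟨x, hx⟩ := Submodule.linearProjOfIsCompl_apply_left hcompl ⟨x, hx⟩
      rw [h4]
      rfl
    have hresid : ∀ x : M, x - ι (q x) ∈ I := by
      intro x
      have h0 : q (x - ι (q x)) = 0 := by
        rw [map_sub, hqι (q x), sub_self]
      rwa [← Submodule.linearProjOfIsCompl_apply_eq_zero_iff hcompl]
    set a : Module.End A ↥K := q ∘ₗ (σ ∘ₗ ι) with hadef
    have hσι : ∀ x : ↥K, σ (ι x) = ι (a x) := by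
      intro x
      have hmem : σ (ι x) ∈ K := hσK _ x.2
      exact (hιq _ hmem).symm
    have hpow_ι : ∀ (m : ℕ) (x : ↥K), (σ ^ m) (ι x) = ι ((a ^ m) x) := by
      intro m
      induction m with
      | zero => intro x; simp
      | succ m ih =>
        intro x
        rw [pow_succ', Module.End.mul_apply, ih x, hσι, pow_succ', Module.End.mul_apply]
    have han : a ^ n = 0 := by
      refine LinearMap.ext fun x => ?_
      have h0 : ι ((a ^ n) x) = 0 := by
        rw [← hpow_ι n x]
        exact LinearMap.mem_ker.mp x.2
      rw [LinearMap.zero_apply]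
      exact Subtype.ext h0
    set b : Module.End A ↥K := ∑ i ∈ Finset.range n, a ^ i with hbdef
    have hb : b * (1 - a) = 1 := by
      have hgs := geom_sum_mul a n
      have h2 : b * (1 - a) = -(b * (a - 1)) := by
        rw [mul_sub, mul_sub, mul_one]
        abel
      rw [h2, hbdef, hgs, han]
      simp
    obtain ⟨P₁, hP₁, g₁, h₁, hτ⟩ := hσproj
    letI := hP₁
    have hqh : ∀ x : ↥K, q (h₁ (g₁ (ι x))) = a x - x := by
      intro x
      have h5 := DFunLike.congr_fun hτ (ι x)
      rw [LinearMap.sub_apply, LinearMap.id_apply, LinearMap.comp_apply] at h5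
      rw [← h5, map_sub, hσι x, hqι, hqι]
    have hKsplit : Module.Projective A ↥K := by
      refine Module.Projective.of_split (g₁.comp ι) ((-b).comp (q.comp h₁)) ?_
      refine LinearMap.ext fun x => ?_
      simp only [LinearMap.comp_apply, LinearMap.neg_apply, LinearMap.id_apply]
      rw [hqh x]
      have h6 := DFunLike.congr_fun hb x
      rw [Module.End.mul_apply, Module.End.one_apply] at h6
      have h7 : a x - x = -((1 - a) x) := by
        simp [LinearMap.sub_apply]
      rw [h7, map_neg, neg_neg, h6]
    haveI hKfin : Module.Finite A ↥K := Module.Finite.iff_fg.mpr (IsNoetherian.noetherian K)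
    haveI hKinj : Module.Injective A ↥K := injective_of_fg_projective hKsplit
    set β : ↥K →ₗ[A] (M ⧸ LinearMap.range f) := (LinearMap.range f).mkQ ∘ₗ ι with hβdef
    set θ : ↥K →ₗ[A] (M ⧸ LinearMap.range f) × ↥K := β.prod a with hθdef
    have hθinj : Function.Injective θ := by
      rw [← LinearMap.ker_eq_bot, eq_bot_iff]
      intro x hx
      rw [LinearMap.mem_ker, hθdef, LinearMap.prod_apply] at hx
      have hx1 : β x = 0 := congrArg Prod.fst hx
      have hx2 : a x = 0 := congrArg Prod.snd hx
      have hmem : ι x ∈ LinearMap.range f := by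
        rw [hβdef, LinearMap.comp_apply] at hx1
        rwa [← Submodule.Quotient.mk_eq_zero, ← Submodule.mkQ_apply]
      obtain ⟨n₀, hn₀⟩ := hmem
      have hσfx : σ (ι x) = 0 := by
        rw [hσι, hx2, map_zero]
      have hf'n₀ : f' n₀ = 0 := by
        have h8 := DFunLike.congr_fun hσf n₀
        rw [LinearMap.comp_apply] at h8
        rw [← h8, hn₀, hσfx]
      have hn₀0 : n₀ = 0 := hf' (by rw [hf'n₀, map_zero])
      have hι0 : ι x = 0 := by rw [← hn₀, hn₀0, map_zero]
      rw [Submodule.mem_bot]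
      exact Subtype.ext hι0
    obtain ⟨ρ, hρ⟩ := Module.Injective.out θ hθinj (LinearMap.id : ↥K →ₗ[A] ↥K)
    set w₀ : (M ⧸ LinearMap.range f) →ₗ[A] ↥K :=
      ρ ∘ₗ LinearMap.inl A (M ⧸ LinearMap.range f) ↥K with hw₀def
    set r : Module.End A ↥K := ρ ∘ₗ LinearMap.inr A (M ⧸ LinearMap.range f) ↥K with hrdef
    have hid : ∀ x : ↥K, w₀ (β x) + r (a x) = x := by
      intro x
      have h11 : ρ (θ x) = w₀ (β x) + r (a x) := by
        rw [hw₀def, hrdef]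
        simp only [LinearMap.comp_apply, LinearMap.inl_apply, LinearMap.inr_apply]
        rw [← map_add]
        congr 1
        rw [hθdef]
        simp [LinearMap.prod_apply, Prod.ext_iff]
      rw [← h11]
      simpa using hρ x
    set st : Module.End A ↥K := w₀ ∘ₗ β with hstdef
    have hst : st = 1 - r * a := by
      refine LinearMap.ext fun x => ?_
      simp only [hstdef, LinearMap.comp_apply, LinearMap.sub_apply, Module.End.one_apply,
        Module.End.mul_apply]
      exact eq_sub_of_add_eq (hid x)
    set u : Module.End A ↥K := a + st with hudef
    haveI fdK : FiniteDimensional k ↥K := FiniteDimensional.of_injective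
      ((K.subtype).restrictScalars k) Subtype.val_injective
    have hnotnil : ¬ IsNilpotent u := by
      rintro ⟨m, hm⟩
      have h1u : (1 : Module.End A ↥K) - u = -((1 - r) * a) := by
        rw [hudef, hst, sub_mul, one_mul]
        abel
      have hunit : IsUnit ((1 - r) * a) := by
        have h11 := IsNilpotent.isUnit_one_sub (⟨m, hm⟩ : IsNilpotent u)
        rw [h1u] at h11
        exact (IsUnit.neg_iff _).mp h11
      obtain ⟨v, hv⟩ := hunit.exists_left_inv
      have hainj : Function.Injective a := by
        intro z1 z2 hz
        have h12 : (v * (1 - r)) * a = 1 := by rw [mul_assoc, hv]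
        have h13 := DFunLike.congr_fun h12 z1
        have h14 := DFunLike.congr_fun h12 z2
        rw [Module.End.mul_apply, Module.End.one_apply] at h13 h14
        rw [← h13, ← h14, hz]
      have hKnontriv : Nontrivial ↥K := Submodule.nontrivial_iff_ne_bot.mpr hK
      obtain ⟨x0, y0, hxy⟩ := hKnontriv
      apply hxy
      have hinj_n : Function.Injective ⇑(a ^ n) := by
        rw [Module.End.coe_pow]
        exact Function.Injective.iterate hainj n
      apply hinj_n
      rw [han]
      rfl
    set w1 : M →ₗ[A] ↥K := w₀ ∘ₗ (LinearMap.range f).mkQ with hw1def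
    set σ' : Module.End A M := σ + ι ∘ₗ w1 with hσ'def
    have hσ'f : (σ' : M →ₗ[A] M).comp f = f' := by
      ext x
      rw [LinearMap.comp_apply, hσ'def, LinearMap.add_apply]
      have h0 : (ι ∘ₗ w1) (f x) = 0 := by
        rw [LinearMap.comp_apply, hw1def, LinearMap.comp_apply]
        have hz : (LinearMap.range f).mkQ (f x) = 0 := by
          rw [Submodule.mkQ_apply, Submodule.Quotient.mk_eq_zero]
          exact LinearMap.mem_range_self f x
        rw [hz, map_zero, map_zero]
      rw [h0, add_zero]
      have h15 := DFunLike.congr_fun hσf x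
      rw [LinearMap.comp_apply] at h15
      exact h15
    have hproj' : IsProjMap A (σ' - LinearMap.id) := by
      have hsplit : σ' - LinearMap.id = (σ - LinearMap.id) + ι ∘ₗ w1 := by
        rw [hσ'def]; abel
      rw [hsplit]
      exact IsProjMap.add' ⟨P₁, hP₁, g₁, h₁, hτ⟩ (isProjMap_factor hKsplit w1 ι rfl)
    have hσ'ι : ∀ x : ↥K, σ' (ι x) = ι (u x) := by
      intro x
      rw [hσ'def, LinearMap.add_apply, hσι, LinearMap.comp_apply, hudef, LinearMap.add_apply,
        map_add]
      congr 1
    have hσ'ιpow : ∀ (m : ℕ) (x : ↥K), (σ' ^ m) (ι x) = ι ((u ^ m) x) := by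
      intro m
      induction m with
      | zero => intro x; simp
      | succ m ih =>
        intro x
        rw [pow_succ', Module.End.mul_apply, ih x, hσ'ι, pow_succ', Module.End.mul_apply]
    have hp1 : ∀ x : M, σ' x - ι (q (σ' x)) = σ (x - ι (q x)) := by
      intro x
      have hpI : x - ι (q x) ∈ I := hresid x
      have hdec : σ' x = ι (u (q x)) + ι (w1 (x - ι (q x))) + σ (x - ι (q x)) := by
        have h20 : σ' x = σ' (ι (q x)) + σ' (x - ι (q x)) := by
          rw [← map_add]
          congr 1
          abel
        rw [h20, hσ'ι]
        have h21 : σ' (x - ι (q x)) = σ (x - ι (q x)) + ι (w1 (x - ι (q x))) := by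
          rw [hσ'def, LinearMap.add_apply, LinearMap.comp_apply]
        rw [h21]
        abel
      have hq' : q (σ' x) = u (q x) + w1 (x - ι (q x)) := by
        rw [hdec, map_add, map_add, hqι, hqι, hqI _ (hσI _ hpI), add_zero]
      rw [hq', map_add, hdec]
      abel
    have hppow : ∀ (m : ℕ) (x : M), (σ' ^ m) x - ι (q ((σ' ^ m) x)) = (σ ^ m) (x - ι (q x)) := by
      intro m
      induction m with
      | zero => intro x; simp
      | succ m ih =>
        intro x
        rw [pow_succ, Module.End.mul_apply, ih (σ' x), hp1 x, pow_succ, Module.End.mul_apply]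
    obtain ⟨n', hn0', hstab'⟩ := exists_fitting σ'
    set m1 := n + n' with hm1def
    have hkerm : LinearMap.ker (σ' ^ m1) = LinearMap.ker (σ' ^ n') := (hstab' m1 (by omega)).1
    have hkerK : ∀ x : M, x ∈ LinearMap.ker (σ' ^ m1) → x = ι (q x) ∧ (u ^ m1) (q x) = 0 := by
      intro x hx
      have h31 := hppow m1 x
      simp only [LinearMap.mem_ker.mp hx, map_zero, sub_zero] at h31
      have h32 : x - ι (q x) ∈ K :=
        (SetLike.ext_iff.mp (hstab m1 (by omega)).1 _).mp (LinearMap.mem_ker.mpr h31.symm)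
      have h33 : x - ι (q x) = 0 := by
        have h16 := hcompl.disjoint
        rw [Submodule.disjoint_def] at h16
        exact h16 _ h32 (hresid x)
      have h34 : x = ι (q x) := by
        have := sub_eq_zero.mp h33
        exact this
      refine ⟨h34, ?_⟩
      have h35 : (σ' ^ m1) (ι (q x)) = 0 := by
        rw [← h34]
        exact LinearMap.mem_ker.mp hx
      rw [hσ'ιpow m1 (q x)] at h35
      exact Subtype.ext h35
    set ut : ↥K →ₗ[k] ↥K := (u ^ m1 : Module.End A ↥K).restrictScalars k with hutdef
    have hmem2 : ∀ x : ↥(LinearMap.ker (σ' ^ m1)),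
        ((q.comp (LinearMap.ker (σ' ^ m1)).subtype).restrictScalars k) x ∈ LinearMap.ker ut := by
      intro x
      rw [LinearMap.mem_ker]
      show (u ^ m1) (q ↑x) = 0
      exact (hkerK ↑x x.2).2
    set χ₂ := LinearMap.codRestrict (LinearMap.ker ut)
      ((q.comp (LinearMap.ker (σ' ^ m1)).subtype).restrictScalars k) hmem2 with hχ₂def
    have hχ₂inj : Function.Injective χ₂ := by
      intro x y hxy
      have hq : q ↑x = q ↑y := congrArg Subtype.val hxy
      apply Subtype.ext
      rw [(hkerK ↑x x.2).1, (hkerK ↑y y.2).1, hq]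
    haveI fdker : FiniteDimensional k ↥(LinearMap.ker (σ' ^ m1)) :=
      FiniteDimensional.of_injective
        (((LinearMap.ker (σ' ^ m1)).subtype).restrictScalars k) Subtype.val_injective
    have hd2 : Module.finrank k ↥(LinearMap.ker (σ' ^ m1)) ≤
        Module.finrank k ↥(LinearMap.ker ut) :=
      LinearMap.finrank_le_finrank_of_injective hχ₂inj
    have hd3 := LinearMap.finrank_range_add_finrank_ker ut
    have hd4 : 0 < Module.finrank k ↥(LinearMap.range ut) := by
      have hune : u ^ m1 ≠ 0 := fun h => hnotnil ⟨m1, h⟩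
      obtain ⟨x0, hx0⟩ : ∃ x0 : ↥K, (u ^ m1) x0 ≠ 0 := by
        by_contra hc
        push_neg at hc
        exact hune (by ext z; simpa using hc z)
      have hnt : Nontrivial ↥(LinearMap.range ut) := by
        refine ⟨⟨⟨ut x0, LinearMap.mem_range_self ut x0⟩, 0, ?_⟩⟩
        intro hcon
        apply hx0
        have h17 := congrArg Subtype.val hcon
        exact h17
      exact Module.finrank_pos_iff.mpr hnt
    have hKpos : 0 < Module.finrank k ↥K := by
      have hnt : Nontrivial ↥K := Submodule.nontrivial_iff_ne_bot.mpr hK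
      exact Module.finrank_pos_iff.mpr hnt
    refine IH (Module.finrank k ↥K - 1) (by omega) σ' hσ'f hproj' ⟨n', hn0', hstab', ?_⟩
    have hfr : Module.finrank k ↥(LinearMap.ker (σ' ^ n')) =
        Module.finrank k ↥(LinearMap.ker (σ' ^ m1)) := by
      rw [hkerm]
    omega

end MainInj


/-- Lemma `stableker`.  Over a split self-injective finite dimensional
algebra with no projective simple module, two stably equal surjections (resp. injections)
differ by an automorphism which is stably the identity. -/
theorem stmt_6 (k A : Type) [Field k] [Ring A] [Algebra k A] [FiniteDimensional k A]
    [Module.Injective A A] (hsplit : IsSplitAlgebra k A) (hnps : NoProjectiveSimple A)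
    (M N : Type) [AddCommGroup M] [Module A M] [Module.Finite A M]
    [AddCommGroup N] [Module A N] [Module.Finite A N] :
    (∀ f f' : M →ₗ[A] N, Function.Surjective f → Function.Surjective f' →
      IsProjMap A (f - f') →
      ∃ σ : M ≃ₗ[A] M, f' = f.comp σ.toLinearMap ∧
        IsProjMap A (σ.toLinearMap - LinearMap.id)) ∧
    (∀ f f' : N →ₗ[A] M, Function.Injective f → Function.Injective f' →
      IsProjMap A (f - f') →
      ∃ σ : M ≃ₗ[A] M, f' = σ.toLinearMap.comp f ∧
        IsProjMap A (σ.toLinearMap - LinearMap.id)) := by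
  letI instkM : Module k M := Module.compHom M (algebraMap k A)
  letI insttow : IsScalarTower k A M :=
    ⟨fun c a m => by rw [Algebra.smul_def, mul_smul]; rfl⟩
  letI instfd : FiniteDimensional k M := Module.Finite.trans A M
  letI instnoe : IsNoetherian A M :=
    isNoetherian_of_tower k (IsNoetherian.iff_fg.mpr instfd)
  letI instart : IsArtinian A M := isArtinian_of_tower k inferInstance
  constructor
  · -- surjective case
    intro f f' hf hf' hproj
    obtain ⟨P, hP, g, h, hfact⟩ := hproj
    letI := hP
    obtain ⟨t, ht⟩ := Module.projective_lifting_property f h hf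
    set σ₀ : Module.End A M := LinearMap.id - t ∘ₗ g with hσ₀def
    have hfσ₀ : f.comp σ₀ = f' := by
      ext m
      rw [LinearMap.comp_apply, hσ₀def, LinearMap.sub_apply, LinearMap.id_apply, map_sub,
        LinearMap.comp_apply]
      have h1 : f (t (g m)) = h (g m) := by
        have := DFunLike.congr_fun ht (g m)
        rwa [LinearMap.comp_apply] at this
      have h2 := DFunLike.congr_fun hfact m
      rw [LinearMap.sub_apply, LinearMap.comp_apply] at h2
      rw [h1, ← h2]
      abel
    have hπ₀ : IsProjMap A (σ₀ - LinearMap.id) := by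
      refine isProjMap_factor hP g (-t) ?_
      rw [hσ₀def]
      ext m
      simp
    obtain ⟨n, hn0, hstab⟩ := exists_fitting σ₀
    exact main_surj f f' hf' (Module.finrank k ↥(LinearMap.ker (σ₀ ^ n))) σ₀ hfσ₀ hπ₀
      ⟨n, hn0, hstab, le_refl _⟩
  · -- injective case
    intro f f' hf hf' hproj
    obtain ⟨T, _, g2, h2, hfact⟩ := isProjMap_factor_pi hproj
    haveI : Module.Injective A (T → A) := injective_pi T
    obtain ⟨t, ht⟩ := Module.Injective.out f hf g2
    set σ₀ : Module.End A M := LinearMap.id - h2 ∘ₗ t with hσ₀def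
    have hσ₀f : (σ₀ : M →ₗ[A] M).comp f = f' := by
      ext x
      rw [LinearMap.comp_apply, hσ₀def, LinearMap.sub_apply, LinearMap.id_apply,
        LinearMap.comp_apply, ht x]
      have h3 := DFunLike.congr_fun hfact x
      rw [LinearMap.sub_apply, LinearMap.comp_apply] at h3
      rw [← h3]
      abel
    have hπ₀ : IsProjMap A (σ₀ - LinearMap.id) := by
      refine isProjMap_factor inferInstance t (-h2) ?_
      rw [hσ₀def]
      ext m
      simp
    obtain ⟨n, hn0, hstab⟩ := exists_fitting σ₀
    exact main_inj f f' hf' (Module.finrank k ↥(LinearMap.ker (σ₀ ^ n))) σ₀ hσ₀f hπ₀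
      ⟨n, hn0, hstab, le_refl _⟩
end
end

section
/- Let M be a non-projective filtrable A-module. Then there exists S ∈ 𝒮 such that some homomorphism M → S is non-projective (i.e., Hom_{A-stab}(M,S) ≠ 0), and there exists S ∈ 𝒮 such that some homomorphism S → M is non-projective (i.e., Hom_{A-stab}(S,M) ≠ 0). -/
noncomputable section

section Aux

variable {A : Type} [Ring A]
variable {M N : Type} [AddCommGroup M] [Module A M] [AddCommGroup N] [Module A N]

lemma isProjMap_zero : IsProjMap A (0 : M →ₗ[A] N) :=
  ⟨ModuleCat.of A A, inferInstanceAs (Module.Projective A A), 0, 0, by ext x; simp⟩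

lemma IsProjMap.comp_left {N' : Type} [AddCommGroup N'] [Module A N'] {f : M →ₗ[A] N}
    (hf : IsProjMap A f) (g : N →ₗ[A] N') : IsProjMap A (g ∘ₗ f) := by
  obtain ⟨P, hP, u, v, rfl⟩ := hf
  exact ⟨P, hP, u, g ∘ₗ v, (LinearMap.comp_assoc _ _ _).symm⟩

lemma IsProjMap.comp_right {N' : Type} [AddCommGroup N'] [Module A N'] {f : M →ₗ[A] N}
    (hf : IsProjMap A f) (g : N' →ₗ[A] M) : IsProjMap A (f ∘ₗ g) := by
  obtain ⟨P, hP, u, v, rfl⟩ := hf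
  exact ⟨P, hP, u ∘ₗ g, v, LinearMap.comp_assoc _ _ _⟩

lemma IsProjMap.add {f g : M →ₗ[A] N} (hf : IsProjMap A f) (hg : IsProjMap A g) :
    IsProjMap A (f + g) := by
  obtain ⟨P, hP, u, v, rfl⟩ := hf
  obtain ⟨Q, hQ, u', v', rfl⟩ := hg
  haveI := hP; haveI := hQ
  refine ⟨ModuleCat.of A (P × Q), inferInstanceAs (Module.Projective A (Prod (P : Type) (Q : Type))),
    LinearMap.prod u u', v ∘ₗ LinearMap.fst A P Q + v' ∘ₗ LinearMap.snd A P Q, ?_⟩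
  ext x
  rfl

lemma isProjMap_sum {κ : Type} (s : Finset κ) (g : κ → (M →ₗ[A] N))
    (h : ∀ j ∈ s, IsProjMap A (g j)) : IsProjMap A (∑ j ∈ s, g j) := by
  classical
  induction s using Finset.induction with
  | empty => simpa using isProjMap_zero
  | @insert a s ha ih =>
      rw [Finset.sum_insert ha]
      exact (h a (Finset.mem_insert_self a s)).add
        (ih fun j hj => h j (Finset.mem_insert_of_mem hj))

lemma isProjMap_pi {n : ℕ} {V : Fin n → Type} [∀ j, AddCommGroup (V j)] [∀ j, Module A (V j)]
    (f : M →ₗ[A] ((j : Fin n) → V j)) (h : ∀ j, IsProjMap A ((LinearMap.proj j) ∘ₗ f)) :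
    IsProjMap A f := by
  have hf : f = ∑ j, LinearMap.single A V j ∘ₗ ((LinearMap.proj j) ∘ₗ f) := by
    ext x
    rw [LinearMap.sum_apply]
    simp only [LinearMap.comp_apply, LinearMap.proj_apply, LinearMap.coe_single]
    rw [Finset.univ_sum_single]
  rw [hf]
  exact isProjMap_sum _ _ fun j _ => (h j).comp_left _

lemma isProjMap_pi' {n : ℕ} {V : Fin n → Type} [∀ j, AddCommGroup (V j)] [∀ j, Module A (V j)]
    (f : ((j : Fin n) → V j) →ₗ[A] M) (h : ∀ j, IsProjMap A (f ∘ₗ LinearMap.single A V j)) :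
    IsProjMap A f := by
  have hf : f = ∑ j, (f ∘ₗ LinearMap.single A V j) ∘ₗ LinearMap.proj j := by
    refine LinearMap.ext fun x => ?_
    rw [LinearMap.sum_apply]
    simp only [LinearMap.comp_apply, LinearMap.proj_apply, LinearMap.coe_single]
    rw [← map_sum, Finset.univ_sum_single]
  rw [hf]
  exact isProjMap_sum _ _ fun j _ => (h j).comp_right _

lemma isProjMap_to_inAddS {ι : Type} {S : ι → Type} [∀ i, AddCommGroup (S i)]
    [∀ i, Module A (S i)] {Q : Type} [AddCommGroup Q] [Module A Q] (hQ : InAddS A S Q)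
    (hhom : ∀ i, ∀ g : M →ₗ[A] S i, IsProjMap A g) (f : M →ₗ[A] Q) : IsProjMap A f := by
  obtain ⟨n, c, ⟨e⟩⟩ := hQ
  have h1 : IsProjMap A (e.toLinearMap ∘ₗ f) := isProjMap_pi _ fun j => hhom _ _
  have h2 := h1.comp_left e.symm.toLinearMap
  have h3 : e.symm.toLinearMap ∘ₗ (e.toLinearMap ∘ₗ f) = f := by ext x; simp
  rwa [h3] at h2

lemma isProjMap_from_inAddS {ι : Type} {S : ι → Type} [∀ i, AddCommGroup (S i)]
    [∀ i, Module A (S i)] {Q : Type} [AddCommGroup Q] [Module A Q] (hQ : InAddS A S Q)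
    (hhom : ∀ i, ∀ g : S i →ₗ[A] M, IsProjMap A g) (f : Q →ₗ[A] M) : IsProjMap A f := by
  obtain ⟨n, c, ⟨e⟩⟩ := hQ
  have h1 : IsProjMap A (f ∘ₗ e.symm.toLinearMap) := isProjMap_pi' _ fun j => hhom _ _
  have h2 := h1.comp_right e.toLinearMap
  have h3 : (f ∘ₗ e.symm.toLinearMap) ∘ₗ e.toLinearMap = f := by ext x; simp
  rwa [h3] at h2

/-- A projective map out of a finitely generated module factors through a finite free
module. -/
lemma IsProjMap.exists_fin_free {X : Type} [AddCommGroup X] [Module A X] [Module.Finite A X]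
    {f : X →ₗ[A] M} (hf : IsProjMap A f) :
    ∃ (n : ℕ) (g : X →ₗ[A] (Fin n → A)) (h : (Fin n → A) →ₗ[A] M), f = h ∘ₗ g := by
  classical
  obtain ⟨P, hP, g, h, rfl⟩ := hf
  obtain ⟨s, hs⟩ := Module.projective_def.mp hP
  set lc : ((P : Type) →₀ A) →ₗ[A] P := Finsupp.linearCombination A _root_.id with hlc
  set g' : X →ₗ[A] ((P : Type) →₀ A) := s ∘ₗ g with hg'
  obtain ⟨t, ht⟩ := Module.Finite.fg_top (R := A) (M := X)
  set T : Finset (P : Type) := t.sup fun x => (g' x).support with hT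
  have hrange : ∀ x : X, g' x ∈ Finsupp.supported A A (↑T : Set (P : Type)) := by
    have hle : LinearMap.range g' ≤ Finsupp.supported A A (↑T : Set (P : Type)) := by
      rw [LinearMap.range_eq_map, ← ht, Submodule.map_span, Submodule.span_le]
      rintro y ⟨x, hx, rfl⟩
      rw [SetLike.mem_coe, Finsupp.mem_supported]
      intro p hp
      exact Finset.mem_coe.mpr (Finset.mem_sup.mpr ⟨x, hx, hp⟩)
    intro x
    exact hle ⟨x, rfl⟩
  set n : ℕ := Fintype.card (↑(↑T : Set (P : Type)))
  set e1 := Finsupp.supportedEquivFinsupp (M := A) (R := A) (↑T : Set (P : Type))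
  set e2 := Finsupp.linearEquivFunOnFinite A A (↑T : Set (P : Type))
  set e3 := LinearEquiv.funCongrLeft A A ((Fintype.equivFin (↑(↑T : Set (P : Type)))).symm)
  set g0 : X →ₗ[A] ↥(Finsupp.supported A A (↑T : Set (P : Type))) :=
    LinearMap.codRestrict _ g' hrange with hg0
  refine ⟨n, e3.toLinearMap ∘ₗ e2.toLinearMap ∘ₗ e1.toLinearMap ∘ₗ g0,
    (h ∘ₗ lc ∘ₗ (Finsupp.supported A A (↑T : Set (P : Type))).subtype) ∘ₗ
      e1.symm.toLinearMap ∘ₗ e2.symm.toLinearMap ∘ₗ e3.symm.toLinearMap, ?_⟩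
  refine LinearMap.ext fun x => ?_
  simp only [LinearMap.coe_comp, LinearEquiv.coe_coe, Function.comp_apply,
    LinearEquiv.symm_apply_apply, Submodule.coe_subtype, hg0, LinearMap.codRestrict_apply,
    hg', LinearMap.comp_apply]
  exact (congrArg h (hs (g x))).symm

lemma injective_pi_fin (A : Type) [Ring A] [Module.Injective A A] (n : ℕ) :
    Module.Injective A (Fin n → A) := by
  have hb : Module.Baer A A := Module.Baer.of_injective inferInstance
  apply Module.Baer.injective
  intro I g
  choose h hh using fun j => hb I ((LinearMap.proj j) ∘ₗ g)
  refine ⟨LinearMap.pi h, fun x hx => ?_⟩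
  funext j
  simpa using hh j x hx

lemma downward_induction {r : ℕ} (Pr : ℕ → Prop) (base : Pr r)
    (step : ∀ i < r, Pr (i + 1) → Pr i) : Pr 0 := by
  have key : ∀ j, j ≤ r → Pr (r - j) := by
    intro j
    induction j with
    | zero => intro _; simpa using base
    | succ j ih =>
        intro hj
        have h1 : r - j = (r - (j + 1)) + 1 := by omega
        have h2 : r - (j + 1) < r := by omega
        have h3 := ih (by omega)
        rw [h1] at h3
        exact step _ h2 h3
  simpa using key r le_rfl

lemma isProjMap_id_iff_projective : IsProjMap A (LinearMap.id : M →ₗ[A] M) ↔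
    Module.Projective A M := by
  constructor
  · rintro ⟨P, hP, g, h, hgh⟩
    haveI := hP
    exact Module.Projective.of_split g h hgh.symm
  · intro hM
    exact ⟨ModuleCat.of A M, hM, LinearMap.id, LinearMap.id, rfl⟩

end Aux

/-- **Statement 7** (Lemma `nonzeromap`). A non-projective filtrable module admits a
non-projective map to some `S ∈ 𝒮` and a non-projective map from some `S ∈ 𝒮`. -/
theorem stmt_7 (k A : Type) [Field k] [Ring A] [Algebra k A] [FiniteDimensional k A]
    [Module.Injective A A] (hsplit : IsSplitAlgebra k A) (hnps : NoProjectiveSimple A)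
    {ι : Type} [Fintype ι] (S : ι → Type) [∀ i, AddCommGroup (S i)] [∀ i, Module A (S i)]
    (hS : SGood k A S)
    (M : Type) [AddCommGroup M] [Module A M] [Module.Finite A M]
    (hMfilt : IsFiltrable A S M) (hMnonproj : ¬ Module.Projective A M) :
    (∃ i, ∃ f : M →ₗ[A] S i, ¬ IsProjMap A f) ∧
    (∃ i, ∃ f : S i →ₗ[A] M, ¬ IsProjMap A f) := by
  classical
  haveI hNA : IsNoetherian A A := isNoetherian_of_tower k inferInstance
  haveI hNRA : IsNoetherianRing A := hNA
  haveI hNM : IsNoetherian A M := inferInstance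
  obtain ⟨r, F, hF0, hFr, hmono, hquot⟩ := hMfilt
  have etop : ↥(F 0) ≃ₗ[A] M := LinearEquiv.ofTop (F 0) hF0
  constructor
  · -- maps to some S i
    by_contra hcon
    push_neg at hcon
    apply hMnonproj
    have base : ∀ f : M →ₗ[A] ↥(F r), IsProjMap A f := by
      haveI : Subsingleton ↥(F r) := by rw [hFr]; infer_instance
      intro f
      rw [Subsingleton.elim f 0]
      exact isProjMap_zero
    have step : ∀ i < r, (∀ f : M →ₗ[A] ↥(F (i + 1)), IsProjMap A f) →
        ∀ f : M →ₗ[A] ↥(F i), IsProjMap A f := by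
      intro i hi ih f
      set F' : Submodule A ↥(F i) := (F (i + 1)).comap (F i).subtype with hF'
      have e : ↥F' ≃ₗ[A] ↥(F (i + 1)) := Submodule.comapSubtypeEquivOfLe (hmono i)
      have hqf : IsProjMap A (F'.mkQ ∘ₗ f) :=
        isProjMap_to_inAddS (hquot i hi) hcon _
      obtain ⟨P, hP, g, h, hfac⟩ := hqf
      haveI := hP
      obtain ⟨h', hh'⟩ := Module.projective_lifting_property F'.mkQ h
        (Submodule.mkQ_surjective F')
      have hmem : ∀ x, (f - h' ∘ₗ g) x ∈ F' := by
        intro x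
        have e1 : F'.mkQ (f x) = h (g x) := LinearMap.congr_fun hfac x
        have e2 : F'.mkQ (h' (g x)) = h (g x) := LinearMap.congr_fun hh' (g x)
        have e3 : F'.mkQ ((f - h' ∘ₗ g) x) = 0 := by
          rw [LinearMap.sub_apply, map_sub, LinearMap.comp_apply, e1, e2, sub_self]
        rwa [Submodule.mkQ_apply, Submodule.Quotient.mk_eq_zero] at e3
      set f0 : M →ₗ[A] ↥F' := LinearMap.codRestrict F' (f - h' ∘ₗ g) hmem with hf0def
      have hf0 : IsProjMap A f0 := by
        have h1 : IsProjMap A (e.toLinearMap ∘ₗ f0) := ih _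
        have h2 := h1.comp_left e.symm.toLinearMap
        have h3 : e.symm.toLinearMap ∘ₗ (e.toLinearMap ∘ₗ f0) = f0 := by ext x; simp
        rwa [h3] at h2
      have hsplit2 : f = F'.subtype ∘ₗ f0 + h' ∘ₗ g := by
        ext x
        simp only [LinearMap.add_apply, LinearMap.comp_apply, hf0def,
          LinearMap.codRestrict_apply, Submodule.coe_subtype, LinearMap.sub_apply]
        rw [sub_add_cancel]
      rw [hsplit2]
      exact (hf0.comp_left _).add ⟨P, hP, g, h', rfl⟩
    have h0 : ∀ f : M →ₗ[A] ↥(F 0), IsProjMap A f :=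
      downward_induction (fun i => ∀ f : M →ₗ[A] ↥(F i), IsProjMap A f) base step
    rw [← isProjMap_id_iff_projective]
    have hid := (h0 etop.symm.toLinearMap).comp_left etop.toLinearMap
    have h3 : etop.toLinearMap ∘ₗ etop.symm.toLinearMap = LinearMap.id := by ext x; simp
    rwa [h3] at hid
  · -- maps from some S i
    by_contra hcon
    push_neg at hcon
    apply hMnonproj
    have base : ∀ f : ↥(F r) →ₗ[A] M, IsProjMap A f := by
      haveI : Subsingleton ↥(F r) := by rw [hFr]; infer_instance
      intro f
      have : f = 0 := by ext x; rw [Subsingleton.elim x 0]; simp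
      rw [this]
      exact isProjMap_zero
    have step : ∀ i < r, (∀ f : ↥(F (i + 1)) →ₗ[A] M, IsProjMap A f) →
        ∀ f : ↥(F i) →ₗ[A] M, IsProjMap A f := by
      intro i hi ih f
      set F' : Submodule A ↥(F i) := (F (i + 1)).comap (F i).subtype with hF'
      have e : ↥F' ≃ₗ[A] ↥(F (i + 1)) := Submodule.comapSubtypeEquivOfLe (hmono i)
      have hres : IsProjMap A (f ∘ₗ F'.subtype) := by
        have h1 : IsProjMap A ((f ∘ₗ F'.subtype) ∘ₗ e.symm.toLinearMap) := ih _
        have h2 := h1.comp_right e.toLinearMap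
        have h3 : ((f ∘ₗ F'.subtype) ∘ₗ e.symm.toLinearMap) ∘ₗ e.toLinearMap =
            f ∘ₗ F'.subtype := by ext x; simp
        rwa [h3] at h2
      haveI : Module.Finite A ↥F' := Module.finite_def.mpr (IsNoetherian.noetherian ⊤)
      obtain ⟨n, g, h, hfac⟩ := hres.exists_fin_free
      haveI := injective_pi_fin A n
      obtain ⟨g', hg'⟩ := Module.Injective.out F'.subtype (Submodule.injective_subtype F') g
      have hker : F' ≤ LinearMap.ker (f - h ∘ₗ g') := by
        intro x hx
        have e1 : g' ((⟨x, hx⟩ : ↥F') : ↥(F i)) = g ⟨x, hx⟩ := hg' ⟨x, hx⟩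
        have e2 : f x = h (g ⟨x, hx⟩) := LinearMap.congr_fun hfac ⟨x, hx⟩
        rw [LinearMap.mem_ker, LinearMap.sub_apply, LinearMap.comp_apply]
        rw [show g' x = g ⟨x, hx⟩ from e1, ← e2, sub_self]
      set φ : (↥(F i) ⧸ F') →ₗ[A] M := F'.liftQ (f - h ∘ₗ g') hker with hφdef
      have hφq : φ ∘ₗ F'.mkQ = f - h ∘ₗ g' := Submodule.liftQ_mkQ F' _ hker
      have hφ : IsProjMap A φ := isProjMap_from_inAddS (hquot i hi) hcon φ
      have hsplit2 : f = φ ∘ₗ F'.mkQ + h ∘ₗ g' := by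
        rw [hφq, sub_add_cancel]
      rw [hsplit2]
      exact (hφ.comp_right _).add ⟨ModuleCat.of A (Fin n → A), inferInstanceAs (Module.Projective A (Fin n → A)), g', h, rfl⟩
    have h0 : ∀ f : ↥(F 0) →ₗ[A] M, IsProjMap A f :=
      downward_induction (fun i => ∀ f : ↥(F i) →ₗ[A] M, IsProjMap A f) base step
    rw [← isProjMap_id_iff_projective]
    have hid := (h0 etop.toLinearMap).comp_right etop.symm.toLinearMap
    have h3 : etop.toLinearMap ∘ₗ etop.symm.toLinearMap = LinearMap.id := by ext x; simp
    rwa [h3] at hid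
end
end
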